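/- Let Ω be a measurable space and let 𝒫 be a nonempty set of probability measures on Ω. Let X, Y : Ω → ℝ be measurable functions, integrable with respect to every P ∈ 𝒫, with sup_{P∈𝒫} E_P[X] and sup_{P∈𝒫} E_P[Y] finite. Assume X ≤ Y quasi-surely (i.e. v({X > Y}) = 0), that v({X < Y}) > 0, and that X has mean certainty, i.e. sup_{P∈𝒫} E_P[X] = −sup_{P∈𝒫} E_P[−X] (equivalently, sup_{P∈𝒫} E_P[X] = inf_{P∈𝒫} E_P[X]). Then sup_{P∈𝒫} E_P[X] < sup_{P∈𝒫} E_P[Y]. -/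

import Mathlib

open MeasureTheory Set
open scoped ENNReal

/-- **Strict comparison theorem under mean certainty (Theorem 3.6).** Let `Ω` be a measurable
space and `𝔓` a nonempty set of probability measures on `Ω`.  Let `X, Y : Ω → ℝ` be measurable,
integrable w.r.t. every `P ∈ 𝔓`, with `sup_{P ∈ 𝔓} E_P[X]` and `sup_{P ∈ 𝔓} E_P[Y]` finite.
If `X ≤ Y` quasi-surely (i.e. `v(X > Y) = 0`), `v(X < Y) > 0`, and `X` has mean certainty,
i.e. `sup_{P ∈ 𝔓} E_P[X] = - sup_{P ∈ 𝔓} E_P[-X]`, then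
`sup_{P ∈ 𝔓} E_P[X] < sup_{P ∈ 𝔓} E_P[Y]`. -/
theorem strict_comparison_mean_certainty
    {Ω : Type*} [MeasurableSpace Ω]
    (𝔓 : Set (Measure Ω)) (h𝔓ne : 𝔓.Nonempty) (hprob : ∀ P ∈ 𝔓, IsProbabilityMeasure P)
    (X Y : Ω → ℝ) (hXmeas : Measurable X) (hYmeas : Measurable Y)
    (hXint : ∀ P ∈ 𝔓, Integrable X P)
    (hYint : ∀ P ∈ 𝔓, Integrable Y P)
    (hXbdd : BddAbove (Set.range fun P : 𝔓 => ∫ ω, X ω ∂(P : Measure Ω)))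
    (hYbdd : BddAbove (Set.range fun P : 𝔓 => ∫ ω, Y ω ∂(P : Measure Ω)))
    (hnegXbdd : BddAbove (Set.range fun P : 𝔓 => ∫ ω, -X ω ∂(P : Measure Ω)))
    (hqs : (⨆ P ∈ 𝔓, P {ω | Y ω < X ω}) = 0)
    (hv : 0 < ⨆ P ∈ 𝔓, P {ω | X ω < Y ω})
    (hcert : (⨆ P : 𝔓, ∫ ω, X ω ∂(P : Measure Ω)) =
      - ⨆ P : 𝔓, ∫ ω, -X ω ∂(P : Measure Ω)) :
    (⨆ P : 𝔓, ∫ ω, X ω ∂(P : Measure Ω)) < ⨆ P : 𝔓, ∫ ω, Y ω ∂(P : Measure Ω) := by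
  -- find P₀ with P₀ {X < Y} > 0
  obtain ⟨P₀, hP₀mem, hP₀pos⟩ : ∃ P ∈ 𝔓, 0 < P {ω | X ω < Y ω} := by
    by_contra h
    push_neg at h
    have : (⨆ P ∈ 𝔓, P {ω | X ω < Y ω}) = 0 := by
      refine le_antisymm ?_ zero_le
      exact iSup₂_le fun P hP => le_of_not_gt fun hlt => (h P hP).not_gt hlt
    exact hv.ne' this
  haveI := hprob P₀ hP₀mem
  -- X ≤ Y a.e. w.r.t. P₀
  have hnull : P₀ {ω | Y ω < X ω} = 0 := by
    refine le_antisymm ?_ zero_le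
    calc P₀ {ω | Y ω < X ω} ≤ ⨆ P ∈ 𝔓, P {ω | Y ω < X ω} :=
          le_iSup₂ (f := fun P (_ : P ∈ 𝔓) => P {ω | Y ω < X ω}) P₀ hP₀mem
      _ = 0 := hqs
  have hle : X ≤ᵐ[P₀] Y := by
    filter_upwards [measure_eq_zero_iff_ae_notMem.mp hnull] with ω hω
    simpa using not_lt.mp hω
  -- strict inequality of integrals at P₀
  have hsub : Integrable (fun ω => Y ω - X ω) P₀ :=
    (hYint P₀ hP₀mem).sub (hXint P₀ hP₀mem)
  have hnn : 0 ≤ᵐ[P₀] fun ω => Y ω - X ω := by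
    filter_upwards [hle] with ω hω; simpa using hω
  have hsupp : 0 < P₀ (Function.support fun ω => Y ω - X ω) := by
    refine lt_of_lt_of_le hP₀pos (measure_mono ?_)
    intro ω hω
    simp only [Function.mem_support]
    exact fun h0 => absurd (sub_eq_zero.mp h0).symm (ne_of_lt hω)
  have hpos : 0 < ∫ ω, (Y ω - X ω) ∂P₀ :=
    (integral_pos_iff_support_of_nonneg_ae hnn hsub).mpr hsupp
  have hint : ∫ ω, X ω ∂P₀ < ∫ ω, Y ω ∂P₀ := by
    have := integral_sub (hYint P₀ hP₀mem) (hXint P₀ hP₀mem)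
    rw [this] at hpos
    linarith
  -- mean certainty: sup E[X] ≤ E_{P₀}[X]
  have h1 : (⨆ P : 𝔓, ∫ ω, X ω ∂(P : Measure Ω)) ≤ ∫ ω, X ω ∂P₀ := by
    rw [hcert]
    have : ∫ ω, -X ω ∂P₀ ≤ ⨆ P : 𝔓, ∫ ω, -X ω ∂(P : Measure Ω) :=
      le_ciSup hnegXbdd (⟨P₀, hP₀mem⟩ : 𝔓)
    have hX : ∫ ω, -X ω ∂P₀ = - ∫ ω, X ω ∂P₀ := by
      simpa using integral_neg (μ := P₀) X
    linarith
  have h2 : ∫ ω, Y ω ∂P₀ ≤ ⨆ P : 𝔓, ∫ ω, Y ω ∂(P : Measure Ω) :=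
    le_ciSup hYbdd (⟨P₀, hP₀mem⟩ : 𝔓)
  linarith
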